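/- If A ∈ ℝ^{M×N} and B ∈ ℝ^{N×P} are column-stochastic matrices, then ‖AB‖ ≤ ‖A‖·‖B‖, where ‖A‖ = max_{j,j'} (1/2)∑_i |A_{i,j} − A_{i,j'}|. -/

import Mathlib

noncomputable def matNorm {m n : Type*} [Fintype m] [Fintype n] [Nonempty n]
    (A : Matrix m n ℝ) : ℝ :=
  Finset.univ.sup' Finset.univ_nonempty
    (fun jj' : n × n => (1 / 2) * ∑ i, |A i jj'.1 - A i jj'.2|)

lemma matNorm_nonneg {m n : Type*} [Fintype m] [Fintype n] [Nonempty n]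
    (A : Matrix m n ℝ) : 0 ≤ matNorm A := by
  obtain ⟨j⟩ := ‹Nonempty n›
  unfold matNorm
  have h := Finset.le_sup' (fun jj' : n × n => (1 / 2) * ∑ i, |A i jj'.1 - A i jj'.2|)
    (Finset.mem_univ (j, j))
  simp only [sub_self, abs_zero, Finset.sum_const_zero, mul_zero] at h
  exact h

lemma col_diff_le {m n : Type*} [Fintype m] [Fintype n] [Nonempty n]
    (A : Matrix m n ℝ) (j j' : n) :
    ∑ i, |A i j - A i j'| ≤ 2 * matNorm A := by
  unfold matNorm
  have h := Finset.le_sup' (fun jj' : n × n => (1 / 2) * ∑ i, |A i jj'.1 - A i jj'.2|)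
    (Finset.mem_univ (j, j'))
  simp only at h
  linarith

lemma contraction {M N : ℕ} [NeZero N] (A : Matrix (Fin M) (Fin N) ℝ)
    (x : Fin N → ℝ) (hx : ∑ j, x j = 0) :
    ∑ i, |∑ j, A i j * x j| ≤ matNorm A * ∑ j, |x j| := by
  set p : Fin N → ℝ := fun j => max (x j) 0 with hp
  set q : Fin N → ℝ := fun j => max (-x j) 0 with hq
  have hp0 : ∀ j, 0 ≤ p j := fun j => le_max_right _ _
  have hq0 : ∀ j, 0 ≤ q j := fun j => le_max_right _ _
  have hpq : ∀ j, x j = p j - q j := fun j =>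
    (max_zero_sub_max_neg_zero_eq_self (x j)).symm
  have habs : ∀ j, |x j| = p j + q j := fun j =>
    (max_zero_add_max_neg_zero_eq_abs_self (x j)).symm
  set s : ℝ := ∑ j, p j with hs
  have hsq : ∑ j, q j = s := by
    have : ∑ j, (p j - q j) = 0 := by
      rw [← hx]; exact Finset.sum_congr rfl fun j _ => (hpq j).symm
    rw [Finset.sum_sub_distrib] at this
    linarith
  have hs0 : 0 ≤ s := Finset.sum_nonneg fun j _ => hp0 j
  rcases eq_or_lt_of_le hs0 with hs' | hs'
  · -- s = 0 ⇒ x = 0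
    have hpz : ∀ j ∈ Finset.univ, p j = 0 := by
      rw [← Finset.sum_eq_zero_iff_of_nonneg (fun j _ => hp0 j)]
      exact hs'.symm
    have hqz : ∀ j ∈ Finset.univ, q j = 0 := by
      rw [← Finset.sum_eq_zero_iff_of_nonneg (fun j _ => hq0 j)]
      rw [hsq]; exact hs'.symm
    have hxz : ∀ j, x j = 0 := fun j => by
      rw [hpq j, hpz j (Finset.mem_univ j), hqz j (Finset.mem_univ j)]; ring
    simp [hxz]
  · -- key identity
    have key : ∀ i, s * ∑ j, A i j * x j
        = ∑ j, ∑ j', p j * q j' * (A i j - A i j') := by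
      intro i
      have h1 : ∑ j, ∑ j', p j * q j' * (A i j - A i j')
          = ∑ j, (p j * A i j * s - p j * ∑ j', q j' * A i j') := by
        refine Finset.sum_congr rfl fun j _ => ?_
        rw [← hsq, Finset.mul_sum, Finset.mul_sum, ← Finset.sum_sub_distrib]
        exact Finset.sum_congr rfl fun j' _ => by ring
      rw [h1, Finset.sum_sub_distrib, ← Finset.sum_mul, ← Finset.sum_mul]
      have h2 : ∑ j, A i j * x j = ∑ j, p j * A i j - ∑ j, q j * A i j := by
        rw [← Finset.sum_sub_distrib]
        exact Finset.sum_congr rfl fun j _ => by rw [hpq j]; ring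
      rw [h2]
      have h3 : ∑ j', q j' * A i j' = ∑ j, q j * A i j := rfl
      rw [h3]
      ring
    have step : s * ∑ i, |∑ j, A i j * x j| ≤ s * (matNorm A * ∑ j, |x j|) := by
      calc s * ∑ i, |∑ j, A i j * x j|
          = ∑ i, |s * ∑ j, A i j * x j| := by
            rw [Finset.mul_sum]
            exact Finset.sum_congr rfl fun i _ => by
              rw [abs_mul, abs_of_nonneg hs0]
        _ = ∑ i, |∑ j, ∑ j', p j * q j' * (A i j - A i j')| := by
            exact Finset.sum_congr rfl fun i _ => by rw [key i]
        _ ≤ ∑ i, ∑ j, ∑ j', p j * q j' * |A i j - A i j'| := by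
            refine Finset.sum_le_sum fun i _ => ?_
            calc |∑ j, ∑ j', p j * q j' * (A i j - A i j')|
                ≤ ∑ j, |∑ j', p j * q j' * (A i j - A i j')| :=
                  Finset.abs_sum_le_sum_abs _ _
              _ ≤ ∑ j, ∑ j', p j * q j' * |A i j - A i j'| := by
                  refine Finset.sum_le_sum fun j _ => ?_
                  calc |∑ j', p j * q j' * (A i j - A i j')|
                      ≤ ∑ j', |p j * q j' * (A i j - A i j')| :=
                        Finset.abs_sum_le_sum_abs _ _
                    _ = ∑ j', p j * q j' * |A i j - A i j'| := by
                        refine Finset.sum_congr rfl fun j' _ => ?_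
                        rw [abs_mul, abs_of_nonneg (mul_nonneg (hp0 j) (hq0 j'))]
        _ = ∑ j, ∑ j', p j * q j' * ∑ i, |A i j - A i j'| := by
            rw [Finset.sum_comm]
            refine Finset.sum_congr rfl fun j _ => ?_
            rw [Finset.sum_comm]
            refine Finset.sum_congr rfl fun j' _ => ?_
            rw [Finset.mul_sum]
        _ ≤ ∑ j, ∑ j', p j * q j' * (2 * matNorm A) := by
            refine Finset.sum_le_sum fun j _ => Finset.sum_le_sum fun j' _ => ?_
            exact mul_le_mul_of_nonneg_left (col_diff_le A j j')
              (mul_nonneg (hp0 j) (hq0 j'))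
        _ = s * s * (2 * matNorm A) := by
            simp only [← Finset.sum_mul, ← Finset.mul_sum]
            rw [hsq, ← hs]
        _ = s * (matNorm A * (2 * s)) := by ring
        _ = s * (matNorm A * ∑ j, |x j|) := by
            congr 2
            rw [Finset.sum_congr rfl fun j _ => habs j, Finset.sum_add_distrib, hsq]
            ring
    exact le_of_mul_le_mul_left step hs'

/-- Submultiplicativity of the total-variation matrix norm for column-stochastic matrices. -/
theorem matNorm_mul_le {M N P : ℕ} [NeZero N] [NeZero P]
    (A : Matrix (Fin M) (Fin N) ℝ) (B : Matrix (Fin N) (Fin P) ℝ)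
    (hA0 : ∀ i j, 0 ≤ A i j) (hA1 : ∀ j, ∑ i, A i j = 1)
    (hB0 : ∀ j k, 0 ≤ B j k) (hB1 : ∀ k, ∑ j, B j k = 1) :
    matNorm (A * B) ≤ matNorm A * matNorm B := by
  rw [matNorm]
  refine Finset.sup'_le _ _ fun kk' _ => ?_
  obtain ⟨k, k'⟩ := kk'
  simp only
  set x : Fin N → ℝ := fun j => B j k - B j k' with hxdef
  have hx : ∑ j, x j = 0 := by
    simp [hxdef, Finset.sum_sub_distrib, hB1 k, hB1 k']
  have hdiff : ∀ i, (A * B) i k - (A * B) i k' = ∑ j, A i j * x j := by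
    intro i
    simp [Matrix.mul_apply, hxdef, mul_sub, Finset.sum_sub_distrib]
  have h1 : ∑ i, |(A * B) i k - (A * B) i k'| ≤ matNorm A * ∑ j, |x j| := by
    rw [Finset.sum_congr rfl fun i _ => by rw [hdiff i]]
    exact contraction A x hx
  have h2 : ∑ j, |x j| ≤ 2 * matNorm B := col_diff_le B k k'
  have hAnn := matNorm_nonneg A
  nlinarith [h1, h2, hAnn]
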